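/- For k > 0 real, p > 0, m ∈ ℕ with m ≥ 1, and b ∈ ℝ with b ≥ 0, the integral ∫_0^∞ x^{k-1} · Q_m(0, b√x) · e^{-p x} dx equals (2/(b²+2p))^k · Σ_{l=0}^{m-1} (b²/(b²+2p))^l · Γ(k+l)/l!. -/

import Mathlib

open Real Filter MeasureTheory Set

/-- Upper incomplete gamma function Γ(s, x) = ∫ₓ^∞ t^(s-1) e^(-t) dt. -/
noncomputable def uGamma (s x : ℝ) : ℝ := ∫ t in Set.Ioi x, t ^ (s - 1) * Real.exp (-t)

/-- Lower incomplete gamma function γ(s, x) = ∫₀ˣ t^(s-1) e^(-t) dt. -/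
noncomputable def lGamma (s x : ℝ) : ℝ := ∫ t in (0:ℝ)..x, t ^ (s - 1) * Real.exp (-t)

/-- Generalized Marcum Q-function of integer order m, via the standard
noncentral chi-square tail representation
Q_m(a,b) = e^{-a²/2} Σₙ (a²/2)ⁿ/n! · Γ(m+n, b²/2)/Γ(m+n). -/
noncomputable def marcumQ (m : ℕ) (a b : ℝ) : ℝ :=
  Real.exp (-(a ^ 2) / 2) *
    ∑' n : ℕ, (a ^ 2 / 2) ^ n / (Nat.factorial n) *
      (uGamma ((m : ℝ) + n) (b ^ 2 / 2) / Real.Gamma ((m : ℝ) + n))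

/-- Modified Bessel function of the first kind, by its series. -/
noncomputable def besselI (ν x : ℝ) : ℝ :=
  ∑' j : ℕ, (x / 2) ^ (ν + 2 * (j : ℝ)) / ((Nat.factorial j) * Real.Gamma (ν + j + 1))

lemma aux_sum_sub (n : ℕ) (t : ℝ) :
    (∑ l ∈ Finset.range (n+1), t ^ l * ((n.factorial : ℝ) / l.factorial)) -
      ∑ l ∈ Finset.range (n+1), (l : ℝ) * t ^ (l - 1) * ((n.factorial : ℝ) / l.factorial)
    = t ^ n := by
  induction n with
  | zero => simp
  | succ n ih =>
    have hfac : ∀ l : ℕ, (((n+1).factorial : ℝ) / l.factorial)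
        = ((n : ℝ)+1) * ((n.factorial : ℝ) / l.factorial) := by
      intro l; rw [Nat.factorial_succ]; push_cast; ring
    have h1 : ∑ l ∈ Finset.range (n+1), t ^ l * (((n+1).factorial : ℝ) / l.factorial)
        = ((n : ℝ)+1) * ∑ l ∈ Finset.range (n+1), t ^ l * ((n.factorial : ℝ) / l.factorial) := by
      rw [Finset.mul_sum]; exact Finset.sum_congr rfl fun l _ => by rw [hfac]; ring
    have h2 : ∑ l ∈ Finset.range (n+1), (l : ℝ) * t ^ (l-1) * (((n+1).factorial : ℝ) / l.factorial)
        = ((n : ℝ)+1) * ∑ l ∈ Finset.range (n+1),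
            (l : ℝ) * t ^ (l-1) * ((n.factorial : ℝ) / l.factorial) := by
      rw [Finset.mul_sum]; exact Finset.sum_congr rfl fun l _ => by rw [hfac]; ring
    rw [Finset.sum_range_succ (f := fun l => t ^ l * (((n+1).factorial : ℝ) / l.factorial)),
      Finset.sum_range_succ (f := fun l => (l : ℝ) * t ^ (l-1) * (((n+1).factorial : ℝ) / l.factorial)),
      h1, h2]
    have hne : (((n+1).factorial : ℝ)) ≠ 0 := Nat.cast_ne_zero.2 (Nat.factorial_ne_zero _)
    have hd : (((n+1).factorial : ℝ) / ((n+1).factorial : ℝ)) = 1 := div_self hne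
    have hsub : (n + 1) - 1 = n := by omega
    rw [hsub, hd]
    push_cast
    linear_combination ((n : ℝ) + 1) * ih

lemma aux_uGamma_succ (n : ℕ) {x : ℝ} (hx : 0 ≤ x) :
    uGamma ((n : ℝ) + 1) x =
      Real.exp (-x) * ∑ l ∈ Finset.range (n+1), x ^ l * ((n.factorial : ℝ) / l.factorial) := by
  have hderiv : ∀ t ∈ Ici x, HasDerivAt
      (fun t => -(Real.exp (-t) * ∑ l ∈ Finset.range (n+1), t ^ l * ((n.factorial : ℝ) / l.factorial)))
      (t ^ n * Real.exp (-t)) t := by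
    intro t _
    have h1 : HasDerivAt (fun t : ℝ => Real.exp (-t)) (Real.exp (-t) * (-1)) t :=
      (hasDerivAt_neg' t).exp
    have h2 : HasDerivAt
        (fun t : ℝ => ∑ l ∈ Finset.range (n+1), t ^ l * ((n.factorial : ℝ) / l.factorial))
        (∑ l ∈ Finset.range (n+1), ((l : ℝ) * t ^ (l-1)) * ((n.factorial : ℝ) / l.factorial)) t :=
      HasDerivAt.fun_sum fun l _ => (hasDerivAt_pow l t).mul_const _
    have h3 := (h1.fun_mul h2).fun_neg
    refine h3.congr_deriv ?_
    have hA := aux_sum_sub n t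
    simp only [mul_assoc] at hA ⊢
    linear_combination (Real.exp (-t)) * hA
  have hpos : ∀ t ∈ Ioi x, (0:ℝ) ≤ t ^ n * Real.exp (-t) := by
    intro t ht
    have : 0 < t := lt_of_le_of_lt hx ht
    positivity
  have htend : Tendsto
      (fun t => -(Real.exp (-t) * ∑ l ∈ Finset.range (n+1), t ^ l * ((n.factorial : ℝ) / l.factorial)))
      atTop (nhds 0) := by
    rw [show (0:ℝ) = -0 by ring]
    apply Tendsto.neg
    have heq : (fun t : ℝ => Real.exp (-t) * ∑ l ∈ Finset.range (n+1),
        t ^ l * ((n.factorial : ℝ) / l.factorial))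
        = fun t => ∑ l ∈ Finset.range (n+1),
            (t ^ l * Real.exp (-t)) * ((n.factorial : ℝ) / l.factorial) := by
      funext t; rw [Finset.mul_sum]; exact Finset.sum_congr rfl fun l _ => by ring
    rw [heq]
    have := tendsto_finset_sum (Finset.range (n+1)) fun l (_ : l ∈ Finset.range (n+1)) =>
      (tendsto_pow_mul_exp_neg_atTop_nhds_zero l).mul_const ((n.factorial : ℝ) / l.factorial)
    simpa using this
  have key := integral_Ioi_of_hasDerivAt_of_nonneg' hderiv hpos htend
  rw [uGamma]
  rw [setIntegral_congr_fun measurableSet_Ioi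
      (fun t (_ : t ∈ Ioi x) => by
        show t ^ ((n : ℝ) + 1 - 1) * Real.exp (-t) = t ^ n * Real.exp (-t)
        rw [add_sub_cancel_right, Real.rpow_natCast] :
        EqOn (fun t : ℝ => t ^ ((n : ℝ) + 1 - 1) * Real.exp (-t))
          (fun t : ℝ => t ^ n * Real.exp (-t)) (Ioi x))]
  rw [key]; ring

lemma aux_marcumQ_zero (n : ℕ) (c : ℝ) :
    marcumQ (n+1) 0 c = uGamma ((n : ℝ) + 1) (c ^ 2 / 2) / (n.factorial : ℝ) := by
  rw [marcumQ]
  rw [tsum_eq_single 0 (by intro j hj; simp [zero_pow hj])]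
  push_cast
  simp [Real.Gamma_nat_eq_factorial]

theorem integral_marcumQ_a_eq_zero (k p b : ℝ) (hk : 0 < k) (hp : 0 < p)
    (m : ℕ) (hm : 1 ≤ m) (hb : 0 ≤ b) :
    ∫ x in Set.Ioi (0 : ℝ),
        x ^ (k - 1) * marcumQ m 0 (b * Real.sqrt x) * Real.exp (-(p * x)) =
      (2 / (b ^ 2 + 2 * p)) ^ k *
        ∑ l ∈ Finset.range m,
          (b ^ 2 / (b ^ 2 + 2 * p)) ^ l * Real.Gamma (k + l) / (Nat.factorial l) := by
  obtain ⟨n, rfl⟩ : ∃ n, m = n + 1 := ⟨m - 1, (Nat.succ_pred_eq_of_pos hm).symm⟩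
  set q : ℝ := b ^ 2 / 2 + p with hq
  have hq0 : 0 < q := by positivity
  have hB0 : (0:ℝ) < b ^ 2 + 2 * p := by positivity
  have hstep : ∀ x ∈ Ioi (0:ℝ),
      x ^ (k - 1) * marcumQ (n+1) 0 (b * Real.sqrt x) * Real.exp (-(p * x))
        = ∑ l ∈ Finset.range (n+1),
            (b ^ 2 / 2) ^ l / (l.factorial : ℝ) * (x ^ (k + l - 1) * Real.exp (-(q * x))) := by
    intro x hx
    have hx0 : (0:ℝ) < x := hx
    have hsq : (b * Real.sqrt x) ^ 2 = b ^ 2 * x := by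
      rw [mul_pow, Real.sq_sqrt hx0.le]
    rw [aux_marcumQ_zero, hsq, aux_uGamma_succ n (by positivity)]
    rw [Finset.mul_sum, Finset.sum_div, Finset.mul_sum, Finset.sum_mul]
    refine Finset.sum_congr rfl fun l _ => ?_
    have hxp : x ^ (k + (l:ℝ) - 1) = x ^ (k - 1) * x ^ (l : ℕ) := by
      rw [← Real.rpow_natCast x l, ← Real.rpow_add hx0]
      ring_nf
    have hexp : Real.exp (-(b ^ 2 * x / 2)) * Real.exp (-(p * x)) = Real.exp (-(q * x)) := by
      rw [← Real.exp_add]; congr 1; rw [hq]; ring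
    have hpowl : (b ^ 2 * x / 2) ^ l = (b ^ 2 / 2) ^ l * x ^ l := by
      rw [show b ^ 2 * x / 2 = b ^ 2 / 2 * x by ring, mul_pow]
    rw [hxp, hpowl, ← hexp]
    have hl : (l.factorial : ℝ) ≠ 0 := Nat.cast_ne_zero.2 (Nat.factorial_ne_zero _)
    have hn : (n.factorial : ℝ) ≠ 0 := Nat.cast_ne_zero.2 (Nat.factorial_ne_zero _)
    field_simp
  rw [setIntegral_congr_fun measurableSet_Ioi hstep]
  have hint : ∀ l ∈ Finset.range (n+1), IntegrableOn
      (fun x : ℝ => (b ^ 2 / 2) ^ l / (l.factorial : ℝ) * (x ^ (k + l - 1) * Real.exp (-(q * x))))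
      (Ioi 0) := by
    intro l _
    refine Integrable.const_mul ?_ _
    have := integrableOn_rpow_mul_exp_neg_mul_rpow (s := k + l - 1) (p := 1) (b := q)
      (by push_cast; linarith [Nat.cast_nonneg (α := ℝ) l]) one_pos hq0
    simpa [neg_mul, IntegrableOn] using this
  rw [MeasureTheory.integral_finset_sum _ hint]
  have hval : ∀ l ∈ Finset.range (n+1),
      ∫ x in Ioi (0:ℝ), (b ^ 2 / 2) ^ l / (l.factorial : ℝ) * (x ^ (k + l - 1) * Real.exp (-(q * x)))
        = (b ^ 2 / 2) ^ l / (l.factorial : ℝ) * ((1 / q) ^ (k + l) * Real.Gamma (k + l)) := by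
    intro l _
    rw [MeasureTheory.integral_const_mul]
    congr 1
    have := integral_rpow_mul_exp_neg_mul_Ioi (a := k + l) (r := q)
      (by positivity) hq0
    simpa using this
  rw [Finset.sum_congr rfl hval, Finset.mul_sum]
  refine Finset.sum_congr rfl fun l _ => ?_
  have h1q : (1:ℝ) / q = 2 / (b ^ 2 + 2 * p) := by
    rw [hq]; field_simp
  rw [h1q, Real.rpow_add (by positivity), Real.rpow_natCast]
  have hcomb : (b ^ 2 / 2) ^ l * (2 / (b ^ 2 + 2 * p)) ^ l = (b ^ 2 / (b ^ 2 + 2 * p)) ^ l := by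
    rw [← mul_pow]; congr 1; field_simp
  have hl : (l.factorial : ℝ) ≠ 0 := Nat.cast_ne_zero.2 (Nat.factorial_ne_zero _)
  rw [← hcomb]
  ring
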